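/- Let γ, σ > 0, assume d = D, set δ := min{ℓ/θ, γ/σ}, and let (S, I, P) be a positive classical solution of the general parabolic Dirichlet problem (1.2) on Ω × (0, ∞). Then for all x ∈ Ω̄ and t ≥ 0, P(x,t) ≤ (1/δ) · max{ max_{Ω̄} (S₀ + I₀ + δP₀), (a + ρ − b)²/(4cρ) }. -/

import Mathlib

open Set Filter Topology

noncomputable def vlap {N : ℕ} (f : EuclideanSpace ℝ (Fin N) → ℝ)
    (x : EuclideanSpace ℝ (Fin N)) : ℝ :=
  ∑ i : Fin N, fderiv ℝ (fun y => fderiv ℝ f y (EuclideanSpace.single i 1)) x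
    (EuclideanSpace.single i 1)

/-- `u` is a positive classical solution component of a parabolic Dirichlet problem on
`Ω × (0, ∞)`: continuous on `closure Ω × [0, ∞)`, twice continuously differentiable in
space and once in time, strictly positive in `Ω × (0, ∞)`, vanishing on
`frontier Ω × (0, ∞)`, with positive initial data in `Ω`. -/
def ParaSol {N : ℕ} (Ω : Set (EuclideanSpace ℝ (Fin N)))
    (u : EuclideanSpace ℝ (Fin N) → ℝ → ℝ) : Prop :=
  ContinuousOn (fun p : EuclideanSpace ℝ (Fin N) × ℝ => u p.1 p.2) (closure Ω ×ˢ Ici 0) ∧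
  (∀ t > (0 : ℝ), ContDiffOn ℝ 2 (fun y => u y t) Ω) ∧
  (∀ x ∈ Ω, ContDiffOn ℝ 1 (fun s => u x s) (Ioi 0)) ∧
  (∀ x ∈ Ω, ∀ t > (0 : ℝ), 0 < u x t) ∧
  (∀ x ∈ frontier Ω, ∀ t > (0 : ℝ), u x t = 0) ∧
  (∀ x ∈ Ω, 0 < u x 0)

section Helpers

lemma deriv2_nonpos_of_isLocalMax {g : ℝ → ℝ} {x : ℝ} (hg : ContDiffAt ℝ 2 g x)
    (hmax : IsLocalMax g x) : deriv (deriv g) x ≤ 0 := by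
  by_contra h
  push_neg at h
  obtain ⟨u, hu, hgu⟩ := hg.contDiffOn le_rfl (by simp)
  obtain ⟨ε, hε, hball⟩ := Metric.mem_nhds_iff.1 hu
  have hgb : ContDiffOn ℝ 2 g (Metric.ball x ε) := hgu.mono hball
  have hopen : IsOpen (Metric.ball x ε) := Metric.isOpen_ball
  have hder : ContDiffOn ℝ 1 (deriv g) (Metric.ball x ε) :=
    hgb.deriv_of_isOpen hopen (by norm_num)
  have hxb : x ∈ Metric.ball x ε := Metric.mem_ball_self hε
  have hdiff : DifferentiableAt ℝ (deriv g) x :=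
    (hder.differentiableOn (by norm_num)).differentiableAt (hopen.mem_nhds hxb)
  have hd0 : deriv g x = 0 :=
    hmax.deriv_eq_zero
  have hslope := hdiff.hasDerivAt
  rw [hasDerivAt_iff_tendsto_slope] at hslope
  have hpos : ∀ᶠ y in 𝓝[>] x, 0 < deriv g y := by
    have h1 : ∀ᶠ y in 𝓝[>] x, 0 < slope (deriv g) x y := by
      have := (hslope.mono_left (nhdsWithin_mono x (show Ioi x ⊆ {x}ᶜ from fun y hy => ne_of_gt hy))).eventually
        (eventually_gt_nhds h)
      simpa using this
    filter_upwards [h1, self_mem_nhdsWithin] with y hy hy'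
    rw [slope_def_field, hd0, sub_zero] at hy
    have : 0 < y - x := sub_pos.2 hy'
    have := hy
    rw [div_pos_iff] at this
    rcases this with ⟨h1, _⟩ | ⟨_, h2⟩
    · exact h1
    · linarith
  obtain ⟨η, hη, hmem⟩ := (nhdsGT_basis x).mem_iff.1 hpos
  obtain ⟨η', hη', hsub, hsub2⟩ : ∃ η' > 0, Icc x (x + η') ⊆ Metric.ball x ε ∧
      Ioo x (x + η') ⊆ Ioo x η := by
    refine ⟨min ((η - x)/2) (ε/2), lt_min (by linarith) (by linarith), ?_, ?_⟩
    · intro y hy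
      simp only [Metric.mem_ball, Real.dist_eq, abs_lt]
      have h2 := hy.2
      have hle : min ((η - x)/2) (ε/2) ≤ ε/2 := min_le_right _ _
      constructor <;> [linarith [hy.1]; linarith]
    · intro y hy
      have hle : min ((η - x)/2) (ε/2) ≤ (η - x)/2 := min_le_left _ _
      exact ⟨hy.1, by linarith [hy.2]⟩
  have hmono : StrictMonoOn g (Icc x (x + η')) := by
    apply strictMonoOn_of_deriv_pos (convex_Icc _ _)
    · exact (hgb.continuousOn).mono hsub
    · intro y hy
      rw [interior_Icc] at hy
      exact hmem (hsub2 hy)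
  have hxlt : x < x + η' := by linarith
  have hlt : g x < g (x + η') := hmono (left_mem_Icc.2 hxlt.le) (right_mem_Icc.2 hxlt.le) hxlt
  obtain ⟨ζ, hζ, hζmem⟩ := Metric.eventually_nhds_iff_ball.1 hmax
  set y := x + min (η'/2) (ζ/2) with hy
  have hy1 : y ∈ Icc x (x + η') := by
    have h1 : (0:ℝ) < min (η'/2) (ζ/2) := lt_min (by linarith) (by linarith)
    have h2 : min (η'/2) (ζ/2) ≤ η'/2 := min_le_left _ _
    exact ⟨by simp only [hy]; linarith, by simp only [hy]; linarith⟩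
  have hy2 : y ∈ Metric.ball x ζ := by
    have h1 : (0:ℝ) < min (η'/2) (ζ/2) := lt_min (by linarith) (by linarith)
    have h2 : min (η'/2) (ζ/2) ≤ ζ/2 := min_le_right _ _
    simp only [Metric.mem_ball, Real.dist_eq, hy, add_sub_cancel_left]
    rw [abs_of_pos h1]
    linarith
  have hxy : x < y := by
    have h1 : (0:ℝ) < min (η'/2) (ζ/2) := lt_min (by linarith) (by linarith)
    simp only [hy, lt_add_iff_pos_right]
    exact h1
  have := hmono (left_mem_Icc.2 hxlt.le) hy1 hxy
  exact absurd (hζmem y hy2) (not_le.2 this)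

variable {E : Type*} [NormedAddCommGroup E] [NormedSpace ℝ E]

lemma dirDeriv2_nonpos {f : E → ℝ} {x : E} (hf : ContDiffAt ℝ 2 f x)
    (hmax : IsLocalMax f x) (v : E) :
    fderiv ℝ (fun y => fderiv ℝ f y v) x v ≤ 0 := by
  set l : ℝ → E := fun s => x + s • v with hl
  have hl0 : l 0 = x := by simp [hl]
  have hlc : ContDiff ℝ 2 l := contDiff_const.add (contDiff_id.smul contDiff_const)
  have hld : ∀ s : ℝ, HasDerivAt l v s := by
    intro s
    simpa [hl] using ((hasDerivAt_id s).smul_const v).const_add x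
  set g : ℝ → ℝ := fun s => f (l s) with hg
  have hgc : ContDiffAt ℝ 2 g 0 := by
    exact ContDiffAt.comp 0 (hl0 ▸ hf) hlc.contDiffAt
  have hgmax : IsLocalMax g 0 := by
    have hten : Tendsto l (𝓝 0) (𝓝 x) := by
      rw [← hl0]; exact (hlc.continuous.tendsto 0)
    have := hten.eventually hmax
    simpa [IsLocalMax, IsMaxFilter, hg, hl0] using this
  have key : deriv (deriv g) 0 = fderiv ℝ (fun y => fderiv ℝ f y v) x v := by
    obtain ⟨u, hu, hfu⟩ := hf.contDiffOn le_rfl (by simp)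
    obtain ⟨ε, hε, hball⟩ := Metric.mem_nhds_iff.1 hu
    have hop : IsOpen (Metric.ball x ε) := Metric.isOpen_ball
    have hfb : ContDiffOn ℝ 2 f (Metric.ball x ε) := hfu.mono hball
    have hpre : IsOpen (l ⁻¹' Metric.ball x ε) := hop.preimage hlc.continuous
    have h0pre : (0:ℝ) ∈ l ⁻¹' Metric.ball x ε := by
      simp [hl0, Metric.mem_ball_self hε]
    have heq : deriv g =ᶠ[𝓝 0] (fun y => fderiv ℝ f y v) ∘ l := by
      filter_upwards [hpre.mem_nhds h0pre] with s hs
      have hdf : DifferentiableAt ℝ f (l s) :=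
        ((hfb.differentiableOn (by norm_num)).differentiableAt (hop.mem_nhds hs))
      have : HasDerivAt g (fderiv ℝ f (l s) v) s :=
        (hdf.hasFDerivAt).comp_hasDerivAt s (hld s)
      exact this.deriv
    rw [heq.deriv_eq]
    have hfd : DifferentiableAt ℝ (fderiv ℝ f) x := by
      have := (hf.fderiv_right (m := 1) le_rfl)
      exact this.differentiableAt (by norm_num)
    have hh : DifferentiableAt ℝ (fun y => fderiv ℝ f y v) x :=
      hfd.clm_apply (differentiableAt_const v)
    have : HasDerivAt ((fun y => fderiv ℝ f y v) ∘ l)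
        (fderiv ℝ (fun y => fderiv ℝ f y v) x v) 0 := by
      have h2 := (show HasFDerivAt (fun y => fderiv ℝ f y v)
          (fderiv ℝ (fun y => fderiv ℝ f y v) x) (l 0) from hl0.symm ▸ hh.hasFDerivAt
        ).comp_hasDerivAt 0 (hld 0)
      exact h2
    exact this.deriv
  rw [← key]
  exact deriv2_nonpos_of_isLocalMax hgc hgmax

lemma diffAt_fderiv_apply {f : E → ℝ} {x : E} (hf : ContDiffAt ℝ 2 f x) (v : E) :
    DifferentiableAt ℝ (fun y => fderiv ℝ f y v) x :=
  ((hf.fderiv_right (m := 1) le_rfl).differentiableAt (by norm_num)).clm_apply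
    (differentiableAt_const v)

lemma fderiv2_comb {Ω : Set E} (hΩ : IsOpen Ω) {f g h : E → ℝ}
    (hf : ContDiffOn ℝ 2 f Ω) (hg : ContDiffOn ℝ 2 g Ω) (hh : ContDiffOn ℝ 2 h Ω)
    {x : E} (hx : x ∈ Ω) (c : ℝ) (v : E) :
    fderiv ℝ (fun y => fderiv ℝ (fun z => f z + g z + c * h z) y v) x v
      = fderiv ℝ (fun y => fderiv ℝ f y v) x v + fderiv ℝ (fun y => fderiv ℝ g y v) x v
        + c * fderiv ℝ (fun y => fderiv ℝ h y v) x v := by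
  have hmem : Ω ∈ 𝓝 x := hΩ.mem_nhds hx
  have hfa : ContDiffAt ℝ 2 f x := hf.contDiffAt hmem
  have hga : ContDiffAt ℝ 2 g x := hg.contDiffAt hmem
  have hha : ContDiffAt ℝ 2 h x := hh.contDiffAt hmem
  have e1 : (fun y => fderiv ℝ (fun z => f z + g z + c * h z) y v)
      =ᶠ[𝓝 x] (fun y => fderiv ℝ f y v + fderiv ℝ g y v + c * fderiv ℝ h y v) := by
    filter_upwards [hmem] with y hy
    have hmy : Ω ∈ 𝓝 y := hΩ.mem_nhds hy
    have df : DifferentiableAt ℝ f y :=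
      ((hf.contDiffAt hmy).differentiableAt (by norm_num))
    have dg : DifferentiableAt ℝ g y :=
      ((hg.contDiffAt hmy).differentiableAt (by norm_num))
    have dh : DifferentiableAt ℝ h y :=
      ((hh.contDiffAt hmy).differentiableAt (by norm_num))
    have : fderiv ℝ (fun z => f z + g z + c * h z) y
        = fderiv ℝ f y + fderiv ℝ g y + c • fderiv ℝ h y := by
      rw [fderiv_fun_add (f := fun z => f z + g z) (df.add dg) (dh.const_mul c), fderiv_fun_add df dg, fderiv_const_mul dh c]
    rw [this]; simp
  rw [show fderiv ℝ (fun y => fderiv ℝ (fun z => f z + g z + c * h z) y v) x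
      = fderiv ℝ (fun y => fderiv ℝ f y v + fderiv ℝ g y v + c * fderiv ℝ h y v) x
    from e1.fderiv_eq]
  have d1 := diffAt_fderiv_apply hfa v
  have d2 := diffAt_fderiv_apply hga v
  have d3 := diffAt_fderiv_apply hha v
  rw [fderiv_fun_add (f := fun y => fderiv ℝ f y v + fderiv ℝ g y v) (d1.add d2) (d3.const_mul c), fderiv_fun_add d1 d2, fderiv_const_mul d3 c]
  simp

lemma vlap_comb {N : ℕ} {Ω : Set (EuclideanSpace ℝ (Fin N))} (hΩ : IsOpen Ω)
    {f g h : EuclideanSpace ℝ (Fin N) → ℝ}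
    (hf : ContDiffOn ℝ 2 f Ω) (hg : ContDiffOn ℝ 2 g Ω) (hh : ContDiffOn ℝ 2 h Ω)
    {x : EuclideanSpace ℝ (Fin N)} (hx : x ∈ Ω) (c : ℝ) :
    vlap (fun z => f z + g z + c * h z) x = vlap f x + vlap g x + c * vlap h x := by
  unfold vlap
  rw [← Finset.sum_add_distrib, Finset.mul_sum, ← Finset.sum_add_distrib]
  exact Finset.sum_congr rfl fun i _ => fderiv2_comb hΩ hf hg hh hx c _

lemma vlap_nonpos {N : ℕ} {Ω : Set (EuclideanSpace ℝ (Fin N))} (hΩ : IsOpen Ω)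
    {f : EuclideanSpace ℝ (Fin N) → ℝ} (hf : ContDiffOn ℝ 2 f Ω)
    {x : EuclideanSpace ℝ (Fin N)} (hx : x ∈ Ω) (hmax : IsLocalMax f x) :
    vlap f x ≤ 0 := by
  unfold vlap
  apply Finset.sum_nonpos
  intro i _
  exact dirDeriv2_nonpos (hf.contDiffAt (hΩ.mem_nhds hx)) hmax _

lemma deriv_nonneg_of_max_left {φ : ℝ → ℝ} {t₀ L : ℝ} (hd : HasDerivAt φ L t₀)
    (hmax : ∀ᶠ s in 𝓝[<] t₀, φ s ≤ φ t₀) : 0 ≤ L := by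
  have hs := hasDerivAt_iff_tendsto_slope.1 hd
  have h2 : Tendsto (slope φ t₀) (𝓝[<] t₀) (𝓝 L) :=
    hs.mono_left (nhdsWithin_mono _ (fun y hy => ne_of_lt hy))
  refine ge_of_tendsto h2 ?_
  filter_upwards [hmax, self_mem_nhdsWithin] with s hs1 hs2
  rw [slope_def_field]
  have h3 : s < t₀ := hs2
  apply div_nonneg_of_nonpos (by linarith) (by linarith)

lemma ParaSol.nonneg {N : ℕ} {Ω : Set (EuclideanSpace ℝ (Fin N))}
    {u : EuclideanSpace ℝ (Fin N) → ℝ → ℝ} (hu : ParaSol Ω u) :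
    ∀ x ∈ closure Ω, ∀ t ≥ 0, 0 ≤ u x t := by
  obtain ⟨hc, _, _, hpos, hbd, h0⟩ := hu
  intro x hx t ht
  have hp : (x, t) ∈ closure Ω ×ˢ Ici (0:ℝ) := ⟨hx, ht⟩
  have hcl : (x, t) ∈ closure (Ω ×ˢ Ioi (0:ℝ)) := by
    rw [closure_prod_eq]
    exact ⟨hx, by rw [closure_Ioi]; exact ht⟩
  have hcw : ContinuousWithinAt (fun p : EuclideanSpace ℝ (Fin N) × ℝ => u p.1 p.2)
      (Ω ×ˢ Ioi 0) (x, t) :=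
    (hc (x, t) hp).mono (prod_mono subset_closure Ioi_subset_Ici_self)
  have hmem := hcw.mem_closure_image hcl
  have himg : (fun p : EuclideanSpace ℝ (Fin N) × ℝ => u p.1 p.2) '' (Ω ×ˢ Ioi 0) ⊆ Ici 0 := by
    rintro _ ⟨⟨y, s⟩, ⟨hy, hs⟩, rfl⟩
    exact (hpos y hy s hs).le
  have : u x t ∈ closure (Ici (0:ℝ)) := closure_mono himg hmem
  rwa [closure_Ici] at this

lemma quad_bound {q c v : ℝ} (hc : 0 < c) : q * v - c * v ^ 2 ≤ q ^ 2 / (4 * c) := by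
  rw [le_div_iff₀ (by linarith : (0:ℝ) < 4 * c)]
  nlinarith [sq_nonneg (2 * c * v - q)]

end Helpers

set_option maxHeartbeats 1000000 in
/-- A priori bound for P when d = D: with δ = min{ℓ/θ, γ/σ},
P ≤ (1/δ) max { max_Ω̄ (S₀ + I₀ + δP₀), (a+ρ-b)²/(4cρ) } on Ω̄ × [0, ∞). -/
theorem stmt16 {N : ℕ} (hN : 1 ≤ N) (Ω : Set (EuclideanSpace ℝ (Fin N)))
    (hΩopen : IsOpen Ω) (hΩconn : IsConnected Ω) (hΩbd : Bornology.IsBounded Ω)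
    (a b c k el gam th sig rh d D : ℝ) (ha : 0 < a) (hb : 0 < b) (hc : 0 < c)
    (hk : 0 < k) (hel : 0 < el) (hgam : 0 < gam) (hth : 0 < th) (hsig : 0 < sig)
    (hrh : 0 < rh) (hd : 0 < d) (hD : 0 < D) (hab : b < a) (hdD : d = D)
    (S I P : EuclideanSpace ℝ (Fin N) → ℝ → ℝ)
    (hS : ParaSol Ω S) (hI : ParaSol Ω I) (hP : ParaSol Ω P)
    (heqS : ∀ x ∈ Ω, ∀ t > (0 : ℝ),
      deriv (fun s => S x s) t - d * vlap (fun y => S y t) x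
        = a * (S x t + I x t) - b * S x t - c * (S x t + I x t) * S x t
          - k * I x t * S x t - el * S x t * P x t)
    (heqI : ∀ x ∈ Ω, ∀ t > (0 : ℝ),
      deriv (fun s => I x s) t - d * vlap (fun y => I y t) x
        = k * I x t * S x t - b * I x t - c * (S x t + I x t) * I x t
          - gam * I x t * P x t)
    (heqP : ∀ x ∈ Ω, ∀ t > (0 : ℝ),
      deriv (fun s => P x s) t - D * vlap (fun y => P y t) x
        = th * S x t * P x t + sig * I x t * P x t - rh * P x t) :
    ∀ x ∈ closure Ω, ∀ t ≥ (0 : ℝ),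
      P x t ≤ (1 / min (el / th) (gam / sig)) *
        max (sSup ((fun y => S y 0 + I y 0 + min (el / th) (gam / sig) * P y 0) ''
              closure Ω))
          ((a + rh - b) ^ 2 / (4 * c * rh)) := by
  have hSnn := hS.nonneg
  have hInn := hI.nonneg
  obtain ⟨Sc, Sx2, St1, Spos, Sbd, S0⟩ := hS
  obtain ⟨Ic, Ix2, It1, Ipos, Ibd, I0⟩ := hI
  obtain ⟨Pc, Px2, Pt1, Ppos, Pbd, P0⟩ := hP
  set δ := min (el / th) (gam / sig) with hδdef
  have hδ : 0 < δ := lt_min (div_pos hel hth) (div_pos hgam hsig)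
  have hδth : δ * th ≤ el := by
    have h1 : δ ≤ el / th := min_le_left _ _
    calc δ * th ≤ (el / th) * th := mul_le_mul_of_nonneg_right h1 hth.le
    _ = el := div_mul_cancel₀ _ (ne_of_gt hth)
  have hδsig : δ * sig ≤ gam := by
    have h1 : δ ≤ gam / sig := min_le_right _ _
    calc δ * sig ≤ (gam / sig) * sig := mul_le_mul_of_nonneg_right h1 hsig.le
    _ = gam := div_mul_cancel₀ _ (ne_of_gt hsig)
  set M1 := sSup ((fun y => S y 0 + I y 0 + δ * P y 0) '' closure Ω) with hM1def
  set M2 := (a + rh - b) ^ 2 / (4 * c * rh) with hM2def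
  have hcp : IsCompact (closure Ω) := hΩbd.isCompact_closure
  -- continuity of W on the product
  have Wc : ContinuousOn (fun p : EuclideanSpace ℝ (Fin N) × ℝ =>
      S p.1 p.2 + I p.1 p.2 + δ * P p.1 p.2) (closure Ω ×ˢ Ici 0) :=
    (Sc.add Ic).add (continuousOn_const.mul Pc)
  have hW0c : ContinuousOn (fun y => S y 0 + I y 0 + δ * P y 0) (closure Ω) := by
    have hmt : MapsTo (fun y : EuclideanSpace ℝ (Fin N) => (y, (0:ℝ)))
        (closure Ω) (closure Ω ×ˢ Ici 0) := fun y hy => ⟨hy, self_mem_Ici⟩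
    exact Wc.comp ((continuous_id.prodMk continuous_const).continuousOn) hmt
  have hbdd : BddAbove ((fun y => S y 0 + I y 0 + δ * P y 0) '' closure Ω) :=
    (hcp.image_of_continuousOn hW0c).bddAbove
  have hle_M1 : ∀ y ∈ closure Ω, S y 0 + I y 0 + δ * P y 0 ≤ M1 :=
    fun y hy => le_csSup hbdd ⟨y, hy, rfl⟩
  have hM2pos : 0 < M2 := by
    rw [hM2def]
    apply div_pos
    · have : 0 < a + rh - b := by linarith
      positivity
    · positivity
  -- the key maximum-principle claim
  have key : ∀ x ∈ closure Ω, ∀ t ≥ (0:ℝ),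
      S x t + I x t + δ * P x t ≤ max M1 M2 := by
    intro x hx t ht
    set T := t + 1 with hTdef
    have hT : 0 < T := by linarith
    have hKcp : IsCompact (closure Ω ×ˢ Icc 0 T) := hcp.prod isCompact_Icc
    have hKne : (closure Ω ×ˢ Icc (0:ℝ) T).Nonempty := ⟨(x, t), hx, ht, by linarith⟩
    have hWK : ContinuousOn (fun p : EuclideanSpace ℝ (Fin N) × ℝ =>
        S p.1 p.2 + I p.1 p.2 + δ * P p.1 p.2) (closure Ω ×ˢ Icc 0 T) :=
      Wc.mono (prod_mono subset_rfl Icc_subset_Ici_self)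
    obtain ⟨⟨x₀, t₀⟩, hp₀K, hp₀max⟩ := hKcp.exists_isMaxOn hKne hWK
    have hmax : ∀ q ∈ closure Ω ×ˢ Icc (0:ℝ) T,
        S q.1 q.2 + I q.1 q.2 + δ * P q.1 q.2 ≤ S x₀ t₀ + I x₀ t₀ + δ * P x₀ t₀ :=
      fun q hq => hp₀max hq
    suffices hs : S x₀ t₀ + I x₀ t₀ + δ * P x₀ t₀ ≤ max M1 M2 by
      exact le_trans (hmax (x, t) ⟨hx, ht, by linarith⟩) hs
    by_contra hgt
    push_neg at hgt
    have hx₀cl : x₀ ∈ closure Ω := hp₀K.1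
    have ht₀Icc : t₀ ∈ Icc (0:ℝ) T := hp₀K.2
    have ht₀ : 0 < t₀ := by
      rcases eq_or_lt_of_le ht₀Icc.1 with h | h
      · exfalso
        have h1 : S x₀ 0 + I x₀ 0 + δ * P x₀ 0 ≤ M1 := hle_M1 x₀ hx₀cl
        rw [← h] at hgt
        have := le_max_left M1 M2
        linarith
      · exact h
    have hx₀ : x₀ ∈ Ω := by
      by_contra hxo
      have hfr : x₀ ∈ frontier Ω := by
        rw [hΩopen.frontier_eq]; exact ⟨hx₀cl, hxo⟩
      have hz : S x₀ t₀ + I x₀ t₀ + δ * P x₀ t₀ = 0 := by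
        rw [Sbd x₀ hfr t₀ ht₀, Ibd x₀ hfr t₀ ht₀, Pbd x₀ hfr t₀ ht₀]; ring
      rw [hz] at hgt
      have := le_max_right M1 M2
      linarith
    -- spatial local max and Laplacian sign
    have hlocmax : IsLocalMax (fun y => S y t₀ + I y t₀ + δ * P y t₀) x₀ := by
      filter_upwards [hΩopen.mem_nhds hx₀] with y hy
      exact hmax (y, t₀) ⟨subset_closure hy, ht₀Icc⟩
    have hSx := Sx2 t₀ ht₀
    have hIx := Ix2 t₀ ht₀
    have hPx := Px2 t₀ ht₀
    have hWx2 : ContDiffOn ℝ 2 (fun y => S y t₀ + I y t₀ + δ * P y t₀) Ω :=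
      (hSx.add hIx).add (contDiffOn_const.mul hPx)
    have hvlap_np : vlap (fun y => S y t₀ + I y t₀ + δ * P y t₀) x₀ ≤ 0 :=
      vlap_nonpos hΩopen hWx2 hx₀ hlocmax
    have hvlap_split : vlap (fun y => S y t₀ + I y t₀ + δ * P y t₀) x₀
        = vlap (fun y => S y t₀) x₀ + vlap (fun y => I y t₀) x₀
          + δ * vlap (fun y => P y t₀) x₀ :=
      vlap_comb hΩopen hSx hIx hPx hx₀ δ
    -- time derivative
    have hSd : DifferentiableAt ℝ (fun s => S x₀ s) t₀ :=
      ((St1 x₀ hx₀).contDiffAt (isOpen_Ioi.mem_nhds ht₀)).differentiableAt (by norm_num)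
    have hId : DifferentiableAt ℝ (fun s => I x₀ s) t₀ :=
      ((It1 x₀ hx₀).contDiffAt (isOpen_Ioi.mem_nhds ht₀)).differentiableAt (by norm_num)
    have hPd : DifferentiableAt ℝ (fun s => P x₀ s) t₀ :=
      ((Pt1 x₀ hx₀).contDiffAt (isOpen_Ioi.mem_nhds ht₀)).differentiableAt (by norm_num)
    have hWd : DifferentiableAt ℝ (fun s => S x₀ s + I x₀ s + δ * P x₀ s) t₀ :=
      (hSd.add hId).add (hPd.const_mul δ)
    have hderiv_split : deriv (fun s => S x₀ s + I x₀ s + δ * P x₀ s) t₀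
        = deriv (fun s => S x₀ s) t₀ + deriv (fun s => I x₀ s) t₀
          + δ * deriv (fun s => P x₀ s) t₀ := by
      rw [deriv_fun_add (f := fun s => S x₀ s + I x₀ s) (hSd.add hId) (hPd.const_mul δ), deriv_fun_add hSd hId,
        deriv_const_mul δ hPd]
    have hderiv_nonneg : 0 ≤ deriv (fun s => S x₀ s + I x₀ s + δ * P x₀ s) t₀ := by
      apply deriv_nonneg_of_max_left hWd.hasDerivAt
      have hIoo : Ioo 0 t₀ ∈ 𝓝[<] t₀ := Ioo_mem_nhdsLT_of_mem ⟨ht₀, le_refl t₀⟩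
      filter_upwards [hIoo] with s hs
      exact hmax (x₀, s) ⟨hx₀cl, hs.1.le, le_trans hs.2.le ht₀Icc.2⟩
    -- PDE combination
    have eS := heqS x₀ hx₀ t₀ ht₀
    have eI := heqI x₀ hx₀ t₀ ht₀
    have eP := heqP x₀ hx₀ t₀ ht₀
    rw [← hdD] at eP
    have hsp : 0 < S x₀ t₀ := Spos x₀ hx₀ t₀ ht₀
    have hip : 0 < I x₀ t₀ := Ipos x₀ hx₀ t₀ ht₀
    have hpp : 0 < P x₀ t₀ := Ppos x₀ hx₀ t₀ ht₀
    have hLHS : 0 ≤ deriv (fun s => S x₀ s + I x₀ s + δ * P x₀ s) t₀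
        - d * vlap (fun y => S y t₀ + I y t₀ + δ * P y t₀) x₀ := by
      nlinarith [hvlap_np, hderiv_nonneg, hd]
    have hRHS : deriv (fun s => S x₀ s + I x₀ s + δ * P x₀ s) t₀
        - d * vlap (fun y => S y t₀ + I y t₀ + δ * P y t₀) x₀
        = (a * (S x₀ t₀ + I x₀ t₀) - b * S x₀ t₀ - c * (S x₀ t₀ + I x₀ t₀) * S x₀ t₀
            - k * I x₀ t₀ * S x₀ t₀ - el * S x₀ t₀ * P x₀ t₀)
          + (k * I x₀ t₀ * S x₀ t₀ - b * I x₀ t₀ - c * (S x₀ t₀ + I x₀ t₀) * I x₀ t₀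
            - gam * I x₀ t₀ * P x₀ t₀)
          + δ * (th * S x₀ t₀ * P x₀ t₀ + sig * I x₀ t₀ * P x₀ t₀ - rh * P x₀ t₀) := by
      rw [hderiv_split, hvlap_split, ← eS, ← eI, ← eP]; ring
    -- algebraic contradiction
    have h4c : (0:ℝ) < 4 * c := by linarith
    have hq : 0 < a + rh - b := by linarith
    have f1 : 0 ≤ (el - δ * th) * ((S x₀ t₀) * (P x₀ t₀)) :=
      mul_nonneg (by linarith) (mul_pos hsp hpp).le
    have f2 : 0 ≤ (gam - δ * sig) * ((I x₀ t₀) * (P x₀ t₀)) :=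
      mul_nonneg (by linarith) (mul_pos hip hpp).le
    have f3 : (a + rh - b) * ((S x₀ t₀) + (I x₀ t₀)) - c * ((S x₀ t₀) + (I x₀ t₀)) ^ 2 ≤ (a + rh - b) ^ 2 / (4 * c) :=
      quad_bound hc
    have hrhM2 : rh * M2 = (a + rh - b) ^ 2 / (4 * c) := by
      rw [hM2def]; field_simp
    have f4 : (a + rh - b) ^ 2 / (4 * c) < rh * ((S x₀ t₀) + (I x₀ t₀) + δ * (P x₀ t₀)) := by
      rw [← hrhM2]
      apply mul_lt_mul_of_pos_left _ hrh
      exact lt_of_le_of_lt (le_max_right M1 M2) hgt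
    have hid : (a * ((S x₀ t₀) + (I x₀ t₀)) - b * (S x₀ t₀) - c * ((S x₀ t₀) + (I x₀ t₀)) * (S x₀ t₀) - k * (I x₀ t₀) * (S x₀ t₀) - el * (S x₀ t₀) * (P x₀ t₀))
        + (k * (I x₀ t₀) * (S x₀ t₀) - b * (I x₀ t₀) - c * ((S x₀ t₀) + (I x₀ t₀)) * (I x₀ t₀) - gam * (I x₀ t₀) * (P x₀ t₀))
        + δ * (th * (S x₀ t₀) * (P x₀ t₀) + sig * (I x₀ t₀) * (P x₀ t₀) - rh * (P x₀ t₀))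
        = ((a + rh - b) * ((S x₀ t₀) + (I x₀ t₀)) - c * ((S x₀ t₀) + (I x₀ t₀)) ^ 2) - rh * ((S x₀ t₀) + (I x₀ t₀) + δ * (P x₀ t₀))
          - (el - δ * th) * ((S x₀ t₀) * (P x₀ t₀)) - (gam - δ * sig) * ((I x₀ t₀) * (P x₀ t₀)) := by ring
    rw [hRHS, hid] at hLHS
    linarith
  -- conclude the bound for P
  intro x hx t ht
  have h1 := key x hx t ht
  have h2 : δ * P x t ≤ max M1 M2 := by
    linarith [hSnn x hx t ht, hInn x hx t ht]
  calc P x t = (δ * P x t) / δ := by field_simp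
  _ ≤ (max M1 M2) / δ := (div_le_div_iff_of_pos_right hδ).2 h2
  _ = (1 / δ) * max M1 M2 := by ring
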